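/- Let n ≥ 1, let S ⊆ ℝ be closed, and let (β̂_{ij})_{i,j ≥ 0, i+2j ≤ 2n} be real numbers. There exists a positive Borel measure μ on ℝ² with supp(μ) ⊆ {(x, x³) : x ∈ S} and β̂_{ij} = ∫ x^i u^j dμ(x,u) for all i, j ≥ 0 with i + 2j ≤ 2n if and only if there exists a positive Borel measure ν on ℝ with supp(ν) ⊆ S and β̂_{ij} = ∫ t^{i+3j} dν(t) for all i, j ≥ 0 with i + 2j ≤ 2n. -/

import Mathlib

open MeasureTheory

/-- For closed `S ⊆ ℝ`, a family `(β̂_{ij})_{i+2j ≤ 2n}` has a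
representing measure on the curve `{(x, x³) : x ∈ S}` (with moments `∫ x^i u^j dμ`) iff it
has a representing measure `ν` on `ℝ` supported in `S` with `β̂_{ij} = ∫ t^{i+3j} dν`. -/
theorem curve_reduction (n : ℕ) (hn : 1 ≤ n) (S : Set ℝ) (hS : IsClosed S)
    (βh : ℕ → ℕ → ℝ) :
    (∃ μ : Measure (ℝ × ℝ), μ {z : ℝ × ℝ | z.1 ∈ S ∧ z.2 = z.1^3}ᶜ = 0 ∧
        ∀ i j : ℕ, i + 2*j ≤ 2*n →
          Integrable (fun z : ℝ × ℝ => z.1 ^ i * z.2 ^ j) μ ∧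
          βh i j = ∫ z : ℝ × ℝ, z.1 ^ i * z.2 ^ j ∂μ) ↔
      (∃ ν : Measure ℝ, ν Sᶜ = 0 ∧
        ∀ i j : ℕ, i + 2*j ≤ 2*n →
          Integrable (fun t : ℝ => t ^ (i + 3*j)) ν ∧
          βh i j = ∫ t : ℝ, t ^ (i + 3*j) ∂ν) := by
  constructor
  · rintro ⟨μ, h0, hmom⟩
    refine ⟨μ.map Prod.fst, ?_, ?_⟩
    · rw [Measure.map_apply measurable_fst hS.measurableSet.compl]
      refine measure_mono_null ?_ h0
      intro z hz hz'
      exact hz hz'.1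
    · intro i j hij
      obtain ⟨hint, heq⟩ := hmom i j hij
      have hae : ∀ᵐ z : ℝ × ℝ ∂μ, z.1 ∈ S ∧ z.2 = z.1 ^ 3 := by
        rw [ae_iff, ← Set.compl_setOf]
        exact h0
      have haeeq : (fun z : ℝ × ℝ => z.1 ^ i * z.2 ^ j)
          =ᵐ[μ] (fun z : ℝ × ℝ => z.1 ^ (i + 3*j)) := by
        filter_upwards [hae] with z hz
        rw [hz.2, ← pow_mul, ← pow_add]
      have hint' : Integrable (fun z : ℝ × ℝ => z.1 ^ (i + 3*j)) μ :=
        hint.congr haeeq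
      have hmeas : AEStronglyMeasurable (fun t : ℝ => t ^ (i + 3*j)) (μ.map Prod.fst) :=
        (measurable_id.pow_const _).aestronglyMeasurable
      constructor
      · rw [integrable_map_measure hmeas measurable_fst.aemeasurable]
        exact hint'
      · rw [integral_map measurable_fst.aemeasurable hmeas]
        rw [heq]
        exact integral_congr_ae haeeq
  · rintro ⟨ν, h0, hmom⟩
    have hm : Measurable (fun t : ℝ => (t, t ^ 3)) :=
      measurable_id.prodMk (measurable_id.pow_const 3)
    refine ⟨ν.map (fun t => (t, t ^ 3)), ?_, ?_⟩
    · have hset : MeasurableSet ({z : ℝ × ℝ | z.1 ∈ S ∧ z.2 = z.1^3}ᶜ) := by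
        refine (MeasurableSet.inter ?_ ?_).compl
        · exact hS.measurableSet.preimage measurable_fst
        · exact measurableSet_eq_fun measurable_snd (measurable_fst.pow_const 3)
      rw [Measure.map_apply hm hset]
      refine le_antisymm ?_ (zero_le)
      rw [← h0]
      apply measure_mono
      intro t ht ht'
      exact ht ⟨ht', rfl⟩
    · intro i j hij
      obtain ⟨hint, heq⟩ := hmom i j hij
      have hmeas : AEStronglyMeasurable (fun z : ℝ × ℝ => z.1 ^ i * z.2 ^ j)
          (ν.map (fun t => (t, t ^ 3))) :=
        ((measurable_fst.pow_const i).mul (measurable_snd.pow_const j)).aestronglyMeasurable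
      have hfun : (fun t : ℝ => (t, t^3).1 ^ i * (t, t^3).2 ^ j)
          = fun t : ℝ => t ^ (i + 3*j) := by
        funext t
        simp [← pow_mul, ← pow_add]
      constructor
      · rw [integrable_map_measure hmeas hm.aemeasurable]
        have hc : ((fun z : ℝ × ℝ => z.1 ^ i * z.2 ^ j) ∘ fun t : ℝ => (t, t ^ 3))
            = fun t : ℝ => t ^ (i + 3*j) := by
          funext t; simp [Function.comp, ← pow_mul, ← pow_add]
        rw [hc]; exact hint
      · rw [integral_map hm.aemeasurable hmeas, heq]
        simp [← pow_mul, ← pow_add]
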